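/- Let A be a finite subset of Z_p. Then for any λ ≠ 0, |Σ_{x∈A} e_p(λx)|^4 ≤ |A|^{-2} · (Σ_s |A_s|^{4/3})^{3/2} · p^{1/2} · E(A)^{1/2}, up to an absolute constant (i.e., |A|·Φ_A^2 ≪ (Σ_s |A_s|^{4/3})^{3/4} p^{1/4} E(A)^{1/4} when A is a multiplicative subgroup of Z_p^*). -/

import Mathlib

open Finset Pointwise

/-- `A` is (the underlying set of) a multiplicative subgroup of `ℤ_p^*`. -/
def mulSubgroup (p : ℕ) (A : Finset (ZMod p)) : Prop :=
  (0 : ZMod p) ∉ A ∧ (1 : ZMod p) ∈ A ∧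
    (∀ x ∈ A, ∀ y ∈ A, x * y ∈ A) ∧ ∀ x ∈ A, x⁻¹ ∈ A

/-- The additive character `e_p(x) = exp(2πi x / p)`. -/
noncomputable def ep (p : ℕ) (x : ZMod p) : ℂ :=
  Complex.exp (2 * Real.pi * Complex.I * (x.val : ℂ) / (p : ℂ))

/-- The additive energy of a finite set. -/
def addEnergy {G : Type*} [AddCommGroup G] [DecidableEq G] (A : Finset G) : ℕ :=
  (((A ×ˢ A) ×ˢ A ×ˢ A).filter fun q => q.1.1 + q.1.2 = q.2.1 + q.2.2).card

section epLemmas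
variable (p : ℕ) [NeZero p]

lemma ep_natCast (n : ℕ) :
    ep p (n : ZMod p) = Complex.exp (2 * Real.pi * Complex.I * (n : ℂ) / (p : ℂ)) := by
  have hp : (p : ℂ) ≠ 0 := Nat.cast_ne_zero.mpr (NeZero.ne p)
  have hval : ((n : ZMod p)).val = n % p := ZMod.val_natCast p n
  have hn : (n : ℂ) = ((n % p : ℕ) : ℂ) + ((n / p : ℕ) : ℂ) * (p : ℂ) := by
    exact_mod_cast congrArg (Nat.cast : ℕ → ℂ) (Nat.mod_add_div' n p).symm
  rw [ep, hval, hn]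
  rw [show 2 * Real.pi * Complex.I * (((n % p : ℕ) : ℂ) + ((n / p : ℕ) : ℂ) * (p:ℂ)) / (p:ℂ)
      = 2 * Real.pi * Complex.I * ((n % p : ℕ) : ℂ) / (p:ℂ)
        + ((n / p : ℕ) : ℂ) * (2 * Real.pi * Complex.I) by
    field_simp]
  rw [Complex.exp_add, Complex.exp_nat_mul_two_pi_mul_I, mul_one]

lemma ep_add (x y : ZMod p) : ep p (x + y) = ep p x * ep p y := by
  have hx : ((x.val : ZMod p)) = x := by rw [ZMod.natCast_val, ZMod.cast_id]
  have hy : ((y.val : ZMod p)) = y := by rw [ZMod.natCast_val, ZMod.cast_id]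
  have h : x + y = ((x.val + y.val : ℕ) : ZMod p) := by push_cast [hx, hy]; ring
  rw [h, ep_natCast, ep, ep, ← Complex.exp_add]
  congr 1
  push_cast
  ring

lemma ep_zero : ep p 0 = 1 := by
  simp [ep, ZMod.val_zero]

lemma ep_abs (x : ZMod p) : ‖ep p x‖ = 1 := by
  rw [ep, show 2 * Real.pi * Complex.I * (x.val : ℂ) / (p:ℂ)
      = ((2 * Real.pi * (x.val : ℝ) / (p : ℝ) : ℝ) : ℂ) * Complex.I by push_cast; ring]
  exact Complex.norm_exp_ofReal_mul_I _

lemma ep_conj (x : ZMod p) : (starRingEnd ℂ) (ep p x) = ep p (-x) := by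
  have h1 : ep p (-x) * ep p x = 1 := by
    rw [← ep_add]; simp [ep_zero]
  have h2 : ep p (-x) = (ep p x)⁻¹ := eq_inv_of_mul_eq_one_left h1
  rw [h2, ← Complex.inv_eq_conj (ep_abs p x)]

lemma ep_ne_one {a : ZMod p} (ha : a ≠ 0) : ep p a ≠ 1 := by
  intro h
  rw [ep, Complex.exp_eq_one_iff] at h
  obtain ⟨n, hn⟩ := h
  have hp : (p : ℂ) ≠ 0 := Nat.cast_ne_zero.mpr (NeZero.ne p)
  have h2 : (2 * (Real.pi:ℂ) * Complex.I) ≠ 0 := by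
    simp [Real.pi_ne_zero, Complex.I_ne_zero]
  have h4 : 2 * (Real.pi:ℂ) * Complex.I * (a.val : ℂ)
      = 2 * (Real.pi:ℂ) * Complex.I * ((n : ℂ) * (p : ℂ)) := by
    rw [div_eq_iff hp] at hn
    linear_combination hn
  have h5 : (a.val : ℂ) = (n : ℂ) * (p : ℂ) := mul_left_cancel₀ h2 h4
  have hval : (a.val : ℤ) = n * p := by exact_mod_cast h5
  have h1 : 0 < a.val := Nat.pos_of_ne_zero fun h0 => ha (by rwa [ZMod.val_eq_zero] at h0)
  have h3 : a.val < p := ZMod.val_lt a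
  have hp0 : 0 < (p:ℤ) := by exact_mod_cast (NeZero.pos p)
  rcases le_or_gt n 0 with hn0 | hn0
  · have : n * (p:ℤ) ≤ 0 := mul_nonpos_of_nonpos_of_nonneg hn0 hp0.le
    omega
  · have : (p:ℤ) ≤ n * p := le_mul_of_one_le_left hp0.le hn0
    omega

lemma sum_ep (a : ZMod p) :
    ∑ s : ZMod p, ep p (a * s) = if a = 0 then (p : ℂ) else 0 := by
  split_ifs with h
  · subst h
    simp only [zero_mul]
    rw [Finset.sum_const, ep_zero]
    simp [ZMod.card]
  · have key : (∑ s : ZMod p, ep p (a * s)) * ep p a = ∑ s : ZMod p, ep p (a * s) := by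
      rw [Finset.sum_mul]
      calc ∑ s : ZMod p, ep p (a * s) * ep p a
          = ∑ s : ZMod p, ep p (a * (s + 1)) := by
            refine Finset.sum_congr rfl fun s _ => ?_
            rw [mul_add, mul_one, ep_add]
        _ = ∑ s : ZMod p, ep p (a * s) :=
            Fintype.sum_equiv (Equiv.addRight 1) _ _ (fun s => rfl)
    have h0 : (∑ s : ZMod p, ep p (a * s)) * (ep p a - 1) = 0 := by
      rw [mul_sub, key, mul_one, sub_self]
    rcases mul_eq_zero.mp h0 with h1 | h1
    · exact h1
    · exact absurd (sub_eq_zero.mp h1) (ep_ne_one p h)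

end epLemmas

theorem stmt17 :
    ∃ C : ℝ, 0 < C ∧
      ∀ (p : ℕ) [NeZero p], p.Prime →
        ∀ A : Finset (ZMod p), mulSubgroup p A →
          ∀ lam : ZMod p, lam ≠ 0 →
            (A.card : ℝ) * ‖∑ x ∈ A, ep p (lam * x)‖ ^ 2 ≤
              C * (∑ s : ZMod p, ((A ∩ A.image (· + s)).card : ℝ) ^ ((4 : ℝ) / 3))
                    ^ ((3 : ℝ) / 4) *
                (p : ℝ) ^ ((1 : ℝ) / 4) * (addEnergy A : ℝ) ^ ((1 : ℝ) / 4) := by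
  refine ⟨1, one_pos, ?_⟩
  intro p _ hp A hA lam hlam
  haveI : Fact p.Prime := ⟨hp⟩
  set S : ℂ := ∑ x ∈ A, ep p (lam * x) with hS
  set T : ZMod p → ℂ := fun t => ∑ a ∈ A, ep p (t * a) with hT
  set r : ZMod p → ℕ := fun s => ((A ×ˢ A).filter fun q => q.1 - q.2 = s).card with hr
  -- Step 1: energy identity
  have energy : ∑ t : ZMod p, ‖T t‖ ^ 4 = (p : ℝ) * (_root_.addEnergy A : ℝ) := by
    have expand : ∀ t : ZMod p, T t * T t * (starRingEnd ℂ) (T t) * (starRingEnd ℂ) (T t)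
        = ∑ q ∈ (A ×ˢ A) ×ˢ (A ×ˢ A), ep p (t * (q.2.1 + q.2.2 - (q.1.1 + q.1.2))) := by
      intro t
      rw [Finset.sum_product, hT]
      simp only [map_sum, ep_conj, Finset.sum_product, Finset.sum_mul, Finset.mul_sum]
      refine Finset.sum_congr rfl fun a _ => ?_
      refine Finset.sum_congr rfl fun b _ => ?_
      refine Finset.sum_congr rfl fun c _ => ?_
      refine Finset.sum_congr rfl fun d _ => ?_
      rw [← ep_add, ← ep_add, ← ep_add]
      congr 1
      ring
    have habs : ∀ t : ZMod p, ((‖T t‖ ^ 4 : ℝ) : ℂ)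
        = T t * T t * (starRingEnd ℂ) (T t) * (starRingEnd ℂ) (T t) := by
      intro t
      have := Complex.mul_conj (T t)
      have hnormSq : (Complex.normSq (T t) : ℂ) = ((‖T t‖ ^ 2 : ℝ) : ℂ) := by
        rw [← Complex.sq_norm]
      rw [show T t * T t * (starRingEnd ℂ) (T t) * (starRingEnd ℂ) (T t)
          = (T t * (starRingEnd ℂ) (T t)) * (T t * (starRingEnd ℂ) (T t)) by ring,
        this, hnormSq]
      push_cast
      ring
    have hsum : ((∑ t : ZMod p, ‖T t‖ ^ 4 : ℝ) : ℂ) = (p : ℝ) * (_root_.addEnergy A : ℝ) := by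
      push_cast
      rw [show (∑ t : ZMod p, (‖T t‖ : ℂ) ^ 4) = ∑ t : ZMod p, ((‖T t‖ ^ 4 : ℝ) : ℂ) by
        push_cast; rfl]
      calc ∑ t : ZMod p, ((‖T t‖ ^ 4 : ℝ) : ℂ)
          = ∑ t : ZMod p, ∑ q ∈ (A ×ˢ A) ×ˢ (A ×ˢ A),
              ep p (t * (q.2.1 + q.2.2 - (q.1.1 + q.1.2))) := by
            exact Finset.sum_congr rfl fun t _ => (habs t).trans (expand t)
        _ = ∑ q ∈ (A ×ˢ A) ×ˢ (A ×ˢ A), ∑ t : ZMod p,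
              ep p (t * (q.2.1 + q.2.2 - (q.1.1 + q.1.2))) := by
            exact Finset.sum_comm
        _ = ∑ q ∈ (A ×ˢ A) ×ˢ (A ×ˢ A), ∑ t : ZMod p,
              ep p ((q.2.1 + q.2.2 - (q.1.1 + q.1.2)) * t) := by
            refine Finset.sum_congr rfl fun q _ => Finset.sum_congr rfl fun t _ => ?_
            rw [mul_comm]
        _ = ∑ q ∈ (A ×ˢ A) ×ˢ (A ×ˢ A),
              if q.2.1 + q.2.2 - (q.1.1 + q.1.2) = 0 then (p : ℂ) else 0 := by
            exact Finset.sum_congr rfl fun q _ => sum_ep p _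
        _ = ∑ q ∈ (A ×ˢ A) ×ˢ (A ×ˢ A),
              if q.1.1 + q.1.2 = q.2.1 + q.2.2 then (p : ℂ) else 0 := by
            refine Finset.sum_congr rfl fun q _ => ?_
            simp only [sub_eq_zero]
            exact if_congr eq_comm rfl rfl
        _ = (p : ℂ) * (_root_.addEnergy A : ℂ) := by
            rw [Finset.sum_ite, Finset.sum_const, Finset.sum_const_zero, add_zero,
              nsmul_eq_mul,
              show _root_.addEnergy A = (((A ×ˢ A) ×ˢ A ×ˢ A).filter fun q =>
                q.1.1 + q.1.2 = q.2.1 + q.2.2).card from rfl, mul_comm]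
    exact_mod_cast hsum
  -- Step 2: invariance under multiplication by elements of A
  have hinv : ∀ a ∈ A, (∑ x ∈ A, ep p (lam * (a * x))) = S := by
    intro a ha
    have ha0 : a ≠ 0 := fun h0 => hA.1 (h0 ▸ ha)
    rw [hS]
    refine Finset.sum_nbij' (i := fun x => a * x) (j := fun y => a⁻¹ * y)
      (fun x hx => hA.2.2.1 a ha x hx) (fun y hy => hA.2.2.1 a⁻¹ (hA.2.2.2 a ha) y hy)
      (fun x _ => by show a⁻¹ * (a * x) = x; rw [← mul_assoc, inv_mul_cancel₀ ha0, one_mul])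
      (fun y _ => by show a * (a⁻¹ * y) = y; rw [← mul_assoc, mul_inv_cancel₀ ha0, one_mul])
      (fun x _ => rfl)
  -- Step 3: expansion
  have hSconj : ((A.card : ℂ)) * (S * (starRingEnd ℂ) S)
      = ∑ q ∈ A ×ˢ A, T (lam * (q.1 - q.2)) := by
    have h1 : ∀ a ∈ A, S * (starRingEnd ℂ) S
        = ∑ q ∈ A ×ˢ A, ep p ((lam * (q.1 - q.2)) * a) := by
      intro a ha
      rw [← hinv a ha, map_sum, Finset.sum_mul_sum, Finset.sum_product]
      refine Finset.sum_congr rfl fun x _ => Finset.sum_congr rfl fun y _ => ?_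
      rw [ep_conj, ← ep_add]
      congr 1
      ring
    calc ((A.card : ℂ)) * (S * (starRingEnd ℂ) S)
        = ∑ a ∈ A, (S * (starRingEnd ℂ) S) := by
          rw [Finset.sum_const, nsmul_eq_mul]
      _ = ∑ a ∈ A, ∑ q ∈ A ×ˢ A, ep p ((lam * (q.1 - q.2)) * a) :=
          Finset.sum_congr rfl h1
      _ = ∑ q ∈ A ×ˢ A, ∑ a ∈ A, ep p ((lam * (q.1 - q.2)) * a) := Finset.sum_comm
      _ = ∑ q ∈ A ×ˢ A, T (lam * (q.1 - q.2)) := rfl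
  -- Step 4: take norms
  have hnorm : (A.card : ℝ) * ‖S‖ ^ 2 ≤ ∑ q ∈ A ×ˢ A, ‖T (lam * (q.1 - q.2))‖ := by
    have h2 : (A.card : ℝ) * ‖S‖ ^ 2 = ‖(A.card : ℂ) * (S * (starRingEnd ℂ) S)‖ := by
      rw [Complex.mul_conj, norm_mul]
      rw [show ‖(A.card : ℂ)‖ = (A.card : ℝ) by
        rw [Complex.norm_natCast]]
      rw [show ‖((Complex.normSq S : ℝ) : ℂ)‖ = Complex.normSq S by
        rw [Complex.norm_real, Real.norm_eq_abs, abs_of_nonneg (Complex.normSq_nonneg S)]]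
      rw [← Complex.sq_norm]
    rw [h2, hSconj]
    exact norm_sum_le _ _
  -- Step 5: fiberwise grouping
  have hfiber : ∑ q ∈ A ×ˢ A, ‖T (lam * (q.1 - q.2))‖
      = ∑ s : ZMod p, (r s : ℝ) * ‖T (lam * s)‖ := by
    rw [← Finset.sum_fiberwise_of_maps_to (g := fun q : ZMod p × ZMod p => q.1 - q.2)
      (fun q _ => Finset.mem_univ (q.1 - q.2)) (fun q => ‖T (lam * (q.1 - q.2))‖)]
    refine Finset.sum_congr rfl fun s _ => ?_
    have hcg : ∀ q ∈ (A ×ˢ A).filter (fun q => q.1 - q.2 = s),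
        ‖T (lam * (q.1 - q.2))‖ = ‖T (lam * s)‖ := fun q hq => by
      rw [(Finset.mem_filter.mp hq).2]
    rw [Finset.sum_congr rfl hcg, Finset.sum_const, nsmul_eq_mul, hr]
  -- Step 6: identify r with the intersection cardinality
  have hrcard : ∀ s : ZMod p, r s = (A ∩ A.image (· + s)).card := by
    intro s
    rw [hr]
    refine Finset.card_nbij' (i := fun q => q.1) (j := fun x => (x, x - s)) ?_ ?_ ?_ ?_
    · rintro ⟨x, y⟩ hq
      simp only [Finset.mem_coe, Finset.mem_filter, Finset.mem_product] at hq
      obtain ⟨⟨hx, hy⟩, hxy⟩ := hq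
      simp only [Finset.mem_coe, Finset.mem_inter, Finset.mem_image]
      exact ⟨hx, ⟨y, hy, by rw [← hxy]; ring⟩⟩
    · intro x hx
      simp only [Finset.mem_coe, Finset.mem_inter, Finset.mem_image] at hx
      obtain ⟨hx1, y, hy, hyx⟩ := hx
      simp only [Finset.mem_coe, Finset.mem_filter, Finset.mem_product]
      refine ⟨⟨hx1, ?_⟩, by ring⟩
      rw [show x - s = y by rw [← hyx]; ring]
      exact hy
    · rintro ⟨x, y⟩ hq
      simp only [Finset.mem_coe, Finset.mem_filter] at hq
      exact Prod.ext rfl (by rw [← hq.2]; ring)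
    · intro x _
      rfl
  -- Step 7: Hölder
  have hconj : Real.HolderConjugate ((4:ℝ)/3) 4 := ⟨by norm_num, by norm_num, by norm_num⟩
  have hHolder : ∑ s : ZMod p, (r s : ℝ) * ‖T (lam * s)‖
      ≤ (∑ s : ZMod p, (r s : ℝ) ^ ((4:ℝ)/3)) ^ ((3:ℝ)/4)
        * (∑ s : ZMod p, ‖T (lam * s)‖ ^ (4:ℝ)) ^ ((1:ℝ)/4) := by
    have := Real.inner_le_Lp_mul_Lq_of_nonneg (s := Finset.univ)
      (f := fun s => (r s : ℝ)) (g := fun s => ‖T (lam * s)‖) hconj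
      (fun i _ => Nat.cast_nonneg _) (fun i _ => norm_nonneg _)
    rwa [show (1:ℝ) / ((4:ℝ)/3) = (3:ℝ)/4 by norm_num,
      show (1:ℝ) / (4:ℝ) = (1:ℝ)/4 by norm_num] at this
  -- Step 8: change of variables and energy
  have hchg : ∑ s : ZMod p, ‖T (lam * s)‖ ^ (4:ℝ) = (p : ℝ) * (_root_.addEnergy A : ℝ) := by
    calc ∑ s : ZMod p, ‖T (lam * s)‖ ^ (4:ℝ)
        = ∑ t : ZMod p, ‖T t‖ ^ (4:ℝ) :=
          Fintype.sum_bijective (fun s => lam * s) (Equiv.mulLeft₀ lam hlam).bijective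
            _ _ (fun s => rfl)
      _ = ∑ t : ZMod p, ‖T t‖ ^ (4:ℕ) := by
          refine Finset.sum_congr rfl fun t _ => ?_
          rw [show (4:ℝ) = ((4:ℕ):ℝ) by norm_num, Real.rpow_natCast]
      _ = (p : ℝ) * (_root_.addEnergy A : ℝ) := energy
  -- Final assembly
  have hfinal : (A.card : ℝ) * ‖S‖ ^ 2
      ≤ (∑ s : ZMod p, (r s : ℝ) ^ ((4:ℝ)/3)) ^ ((3:ℝ)/4)
        * ((p : ℝ) * (_root_.addEnergy A : ℝ)) ^ ((1:ℝ)/4) := by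
    calc (A.card : ℝ) * ‖S‖ ^ 2 ≤ ∑ q ∈ A ×ˢ A, ‖T (lam * (q.1 - q.2))‖ := hnorm
      _ = ∑ s : ZMod p, (r s : ℝ) * ‖T (lam * s)‖ := hfiber
      _ ≤ (∑ s : ZMod p, (r s : ℝ) ^ ((4:ℝ)/3)) ^ ((3:ℝ)/4)
          * (∑ s : ZMod p, ‖T (lam * s)‖ ^ (4:ℝ)) ^ ((1:ℝ)/4) := hHolder
      _ = _ := by rw [hchg]
  rw [Real.mul_rpow (Nat.cast_nonneg _) (Nat.cast_nonneg _)] at hfinal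
  calc (A.card : ℝ) * ‖S‖ ^ 2
      ≤ (∑ s : ZMod p, (r s : ℝ) ^ ((4:ℝ)/3)) ^ ((3:ℝ)/4)
        * ((p : ℝ) ^ ((1:ℝ)/4) * (_root_.addEnergy A : ℝ) ^ ((1:ℝ)/4)) := hfinal
    _ = 1 * (∑ s : ZMod p, ((A ∩ A.image (· + s)).card : ℝ) ^ ((4:ℝ)/3)) ^ ((3:ℝ)/4)
        * (p : ℝ) ^ ((1:ℝ)/4) * (_root_.addEnergy A : ℝ) ^ ((1:ℝ)/4) := by
      simp only [hrcard]
      ring
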